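/- Let α > 0 and suppose η* ∈ ℝ satisfies B(η*, α) = 0, i.e. 3 e^{-η*} / A_0(η*) = 3 − 2η* + 4(η*)²/α. Then B_η(η*, α) = −(8η*/(3α²)) · ((η*)² + η*α/2 + (α/2)(15/2 − α)). -/

import Mathlib

open Real MeasureTheory Set Filter

/-- `A k η = ∫_0^1 z^k e^{-η z²} dz`. -/
noncomputable def A (k : ℕ) (η : ℝ) : ℝ :=
  ∫ z in (0:ℝ)..1, z ^ k * Real.exp (-η * z ^ 2)

/-- `B(η, α) = 3 e^{-η} / A₀(η) − (3 − 2η + 4η²/α)`. -/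
noncomputable def B (η α : ℝ) : ℝ :=
  3 * Real.exp (-η) / A 0 η - (3 - 2 * η + 4 * η ^ 2 / α)

lemma contA (k : ℕ) (η : ℝ) : Continuous fun z : ℝ => z ^ k * Real.exp (-η * z ^ 2) := by
  continuity

lemma A0_pos (η : ℝ) : 0 < A 0 η := by
  apply intervalIntegral.intervalIntegral_pos_of_pos ((contA 0 η).intervalIntegrable 0 1)
  · intro x; positivity
  · norm_num

lemma A2_zero : A 2 0 = 1 / 3 := by
  simp only [A, neg_zero, zero_mul, Real.exp_zero, mul_one]
  rw [integral_pow]; norm_num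

/-- FTC identity: `A₀ η − 2η A₂ η = e^{−η}`. -/
lemma key_identity (η : ℝ) : A 0 η - 2 * η * A 2 η = Real.exp (-η) := by
  have hderiv : ∀ z ∈ Set.uIcc (0:ℝ) 1,
      HasDerivAt (fun z : ℝ => z * Real.exp (-η * z ^ 2))
        (z ^ 0 * Real.exp (-η * z ^ 2) - 2 * η * (z ^ 2 * Real.exp (-η * z ^ 2))) z := by
    intro z _
    have h1 : HasDerivAt (fun z : ℝ => -η * z ^ 2) (-η * (2 * z)) z := by
      simpa using ((hasDerivAt_pow 2 z).const_mul (-η))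
    have h2 := ((h1.exp).const_mul z).add_const 0
    have h3 := (hasDerivAt_id z).mul h1.exp
    exact h3.congr_deriv (by simp only [id_eq]; ring)
  have hint : Continuous fun z : ℝ =>
      z ^ 0 * Real.exp (-η * z ^ 2) - 2 * η * (z ^ 2 * Real.exp (-η * z ^ 2)) := by
    continuity
  have := intervalIntegral.integral_eq_sub_of_hasDerivAt hderiv (hint.intervalIntegrable 0 1)
  rw [intervalIntegral.integral_sub ((contA 0 η).intervalIntegrable 0 1)
      ((show Continuous fun z : ℝ => 2 * η * (z ^ 2 * Real.exp (-η * z ^ 2)) from continuous_const.mul (contA 2 η)).intervalIntegrable 0 1)] at this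
  rw [intervalIntegral.integral_const_mul] at this
  simpa [A] using this

/-- Differentiation under the integral sign: `A₀' = −A₂`. -/
lemma hasDerivAt_A0 (η : ℝ) : HasDerivAt (fun x => A 0 x) (-(A 2 η)) η := by
  have key := intervalIntegral.hasDerivAt_integral_of_dominated_loc_of_deriv_le
    (F := fun x t => t ^ 0 * Real.exp (-x * t ^ 2))
    (F' := fun x t => -(t ^ 2 * Real.exp (-x * t ^ 2)))
    (x₀ := η) (a := 0) (b := 1) (μ := volume)
    (bound := fun _ => Real.exp (|η| + 1)) (s := Metric.ball η 1) (Metric.ball_mem_nhds η one_pos)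
    (Eventually.of_forall fun x => (contA 0 x).aestronglyMeasurable)
    ((contA 0 η).intervalIntegrable 0 1)
    (Continuous.aestronglyMeasurable (by continuity))
    ?_ (by simp [intervalIntegrable_const]) ?_
  · have h2 : (∫ t in (0:ℝ)..1, -(t ^ 2 * Real.exp (-η * t ^ 2))) = -(A 2 η) := by
      rw [intervalIntegral.integral_neg]; rfl
    rw [← h2]
    exact key.2
  · filter_upwards with t ht x hx
    rw [Set.uIoc_of_le (by norm_num : (0:ℝ) ≤ 1)] at ht
    rw [Metric.mem_ball, Real.dist_eq] at hx
    have ht1 : 0 < t := ht.1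
    have ht2 : t ≤ 1 := ht.2
    have htsq : t ^ 2 ≤ 1 := by nlinarith
    have hxb : |x| ≤ |η| + 1 := by
      have := abs_sub_abs_le_abs_sub x η
      linarith [le_of_lt hx]
    have hexp : Real.exp (-x * t ^ 2) ≤ Real.exp (|η| + 1) := by
      apply Real.exp_le_exp.mpr
      have h1 : -x * t ^ 2 ≤ |x| * t ^ 2 := by
        apply mul_le_mul_of_nonneg_right _ (sq_nonneg t)
        cases abs_cases x with
        | inl h => linarith [h.1]
        | inr h => linarith [h.1]
      have h2 : |x| * t ^ 2 ≤ |x| := by nlinarith [abs_nonneg x]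
      linarith
    have : ‖-(t ^ 2 * Real.exp (-x * t ^ 2))‖ = t ^ 2 * Real.exp (-x * t ^ 2) := by
      rw [norm_neg, Real.norm_eq_abs, abs_of_nonneg (by positivity)]
    rw [this]
    nlinarith [Real.exp_pos (-x * t ^ 2), Real.exp_pos (|η| + 1)]
  · filter_upwards with t _ x _
    have h1 : HasDerivAt (fun x : ℝ => -x * t ^ 2) (-(t ^ 2)) x := by
      simpa using ((hasDerivAt_id x).neg.mul_const (t ^ 2))
    have h2 := h1.exp
    have h3 : HasDerivAt (fun x : ℝ => t ^ 0 * Real.exp (-x * t ^ 2))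
        (t ^ 0 * (Real.exp (-x * t ^ 2) * -(t ^ 2))) x := h2.const_mul _
    exact h3.congr_deriv (by ring)

/-- If `α > 0` and `B(η*, α) = 0`, then
`B_η(η*, α) = −(8η*/(3α²))((η*)² + η*α/2 + (α/2)(15/2 − α))`. -/
theorem stmt_11 (α : ℝ) (hα : 0 < α) (ηs : ℝ) (hzero : B ηs α = 0) :
    deriv (fun η : ℝ => B η α) ηs =
      -(8 * ηs / (3 * α ^ 2)) * (ηs ^ 2 + ηs * α / 2 + α / 2 * (15 / 2 - α)) := by
  have ha : 0 < A 0 ηs := A0_pos ηs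
  have hane : A 0 ηs ≠ 0 := ne_of_gt ha
  set a := A 0 ηs with ha_def
  set c := A 2 ηs with hc_def
  set E := Real.exp (-ηs) with hE_def
  -- derivative of the quotient part
  have hnum : HasDerivAt (fun η : ℝ => 3 * Real.exp (-η)) (-(3 * E)) ηs := by
    have := ((hasDerivAt_id ηs).neg.exp).const_mul (3:ℝ)
    simpa [hE_def, mul_comm] using this
  have hden : HasDerivAt (fun η : ℝ => A 0 η) (-c) ηs := hasDerivAt_A0 ηs
  have hq : HasDerivAt (fun η : ℝ => 3 * Real.exp (-η) / A 0 η)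
      ((-(3 * E) * a - 3 * E * -c) / a ^ 2) ηs := hnum.div hden hane
  have hpoly : HasDerivAt (fun η : ℝ => 3 - 2 * η + 4 * η ^ 2 / α)
      (-2 + 4 * (2 * ηs) / α) ηs := by
    have h1 : HasDerivAt (fun η : ℝ => 3 - 2 * η) (-2) ηs := by
      simpa using ((hasDerivAt_id ηs).const_mul (2:ℝ)).const_sub 3
    have h2 : HasDerivAt (fun η : ℝ => 4 * η ^ 2 / α) (4 * (2 * ηs) / α) ηs := by
      have := ((hasDerivAt_pow 2 ηs).const_mul (4:ℝ)).div_const α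
      simpa using this
    exact h1.add h2
  have hB : HasDerivAt (fun η : ℝ => B η α)
      ((-(3 * E) * a - 3 * E * -c) / a ^ 2 - (-2 + 4 * (2 * ηs) / α)) ηs := by
    simpa [B] using (show HasDerivAt (fun η : ℝ => 3 * Real.exp (-η) / A 0 η - (3 - 2 * η + 4 * η ^ 2 / α)) _ ηs from hq.sub hpoly)
  rw [hB.deriv]
  -- algebraic facts
  have hkey : a - 2 * ηs * c = E := key_identity ηs
  have hzero' : 3 * E = (3 - 2 * ηs + 4 * ηs ^ 2 / α) * a := by
    have h := hzero
    simp only [B] at h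
    have h2 : 3 * E / a = 3 - 2 * ηs + 4 * ηs ^ 2 / α := by linarith
    calc 3 * E = 3 * E / a * a := by field_simp
    _ = (3 - 2 * ηs + 4 * ηs ^ 2 / α) * a := by rw [h2]
  rcases eq_or_ne ηs 0 with h0 | h0
  · subst h0
    have haE : a = E := by simpa using hkey
    have hE1 : E = 1 := by simp [hE_def]
    have hc13 : c = 1 / 3 := A2_zero
    rw [haE, hE1, hc13]
    norm_num
  · have hc : c = (a - E) / (2 * ηs) := by
      field_simp
      linarith [hkey]
    have hE : E = (3 - 2 * ηs + 4 * ηs ^ 2 / α) * a / 3 := by linarith [hzero']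
    rw [hc, hE]
    have hαne : α ≠ 0 := ne_of_gt hα
    field_simp
    ring
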